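/- arXiv:2302.06814 — 2 statements merged into one kernel-verified Lean document; each statement's English description precedes it below -/
import Mathlib

section
/- Let Φ : ℝⁿ⁻¹ × ℝ → Prop, let C ⊆ ℝⁿ⁻¹, and suppose C₁,…,C_m are subsets of C × ℝ whose union is C × ℝ, each Cᵢ projects onto all of C, and Φ is truth-invariant on each Cᵢ. Fix sample points sᵢ ∈ Cᵢ. Then for every s ∈ C, (∀ y ∈ ℝ, Φ(s, y)) holds if and only if Φ(sᵢ) holds for every i. -/
/-- Universal lifting step of CAD: cells `C₁,…,C_m` covering the cylinder
`C × ℝ`, each projecting onto `C`, truth-invariant for `Φ`, with sample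
points `s i ∈ C i`. -/
theorem cad_forall_lift {n m : ℕ} (Φ : (Fin n → ℝ) × ℝ → Prop)
    (C : Set (Fin n → ℝ)) (cells : Fin m → Set ((Fin n → ℝ) × ℝ))
    (hsub : ∀ i, cells i ⊆ C ×ˢ (Set.univ : Set ℝ))
    (hcover : (⋃ i, cells i) = C ×ˢ (Set.univ : Set ℝ))
    (hproj : ∀ i, ∀ s ∈ C, ∃ y : ℝ, (s, y) ∈ cells i)
    (hinv : ∀ i, ∀ p ∈ cells i, ∀ q ∈ cells i, Φ p ↔ Φ q)
    (sp : Fin m → (Fin n → ℝ) × ℝ) (hsp : ∀ i, sp i ∈ cells i) :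
    ∀ s ∈ C, ((∀ y : ℝ, Φ (s, y)) ↔ ∀ i, Φ (sp i)) := by
  intro s hs
  constructor
  · intro h i
    obtain ⟨y, hy⟩ := hproj i s hs
    exact (hinv i (sp i) (hsp i) (s, y) hy).mpr (h y)
  · intro h y
    have hmem : (s, y) ∈ ⋃ i, cells i := by
      rw [hcover]; exact ⟨hs, trivial⟩
    obtain ⟨_, ⟨i, rfl⟩, hi⟩ := hmem
    exact (hinv i (sp i) (hsp i) (s, y) hi).mp (h i)
end

section
/- For truth-invariant decompositions, removing a subtree whose root has a determined truth value preserves correctness: if Φ is truth-invariant on a cell C and all cells in the cylinder above C, and the truth value of the quantified formula Q y Φ on C has been determined from finitely many sample points as in the CAD lifting lemma, then the truth of the full quantified formula on any cell of the base decomposition is unchanged by discarding (not evaluating) the cells above C. -/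
/-- Partial CAD pruning: in a truth-invariant cell decomposition of the
cylinder over a base cell `C`, once some subfamily of cells contains a
decisive sample point (a true one for `∃`, a false one for `∀`), the truth
value of the quantified formula on `C` is already determined by that
subfamily; discarding (not evaluating) the remaining cells does not change
the result. -/
theorem partial_cad_pruning {n m : ℕ} (Φ : (Fin n → ℝ) × ℝ → Prop)
    (C : Set (Fin n → ℝ)) (cells : Fin m → Set ((Fin n → ℝ) × ℝ))
    (hsub : ∀ i, cells i ⊆ C ×ˢ (Set.univ : Set ℝ))
    (hcover : (⋃ i, cells i) = C ×ˢ (Set.univ : Set ℝ))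
    (hproj : ∀ i, ∀ x ∈ C, ∃ y : ℝ, (x, y) ∈ cells i)
    (hinv : ∀ i, ∀ p ∈ cells i, ∀ q ∈ cells i, Φ p ↔ Φ q)
    (s : Fin m → (Fin n → ℝ) × ℝ) (hs : ∀ i, s i ∈ cells i) :
    (∀ T : Finset (Fin m), (∃ i ∈ T, Φ (s i)) →
        ∀ x ∈ C, ((∃ y : ℝ, Φ (x, y)) ↔ ∃ i ∈ T, Φ (s i))) ∧
      (∀ T : Finset (Fin m), (∃ i ∈ T, ¬ Φ (s i)) →
        ∀ x ∈ C, ((∀ y : ℝ, Φ (x, y)) ↔ ∀ i ∈ T, Φ (s i))) := by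
  constructor
  · rintro T ⟨i, hiT, hΦ⟩ x hx
    obtain ⟨y, hy⟩ := hproj i x hx
    exact ⟨fun _ => ⟨i, hiT, hΦ⟩, fun _ => ⟨y, (hinv i _ hy _ (hs i)).2 hΦ⟩⟩
  · rintro T ⟨i, hiT, hΦ⟩ x hx
    obtain ⟨y, hy⟩ := hproj i x hx
    constructor
    · intro h
      exact absurd ((hinv i _ hy _ (hs i)).1 (h y)) hΦ
    · intro h
      exact absurd (h i hiT) hΦ
end
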